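/- Let l, k > 0, d ≥ 0 and v ∈ (0, k). Then the set Ψ_v = {(x,y) ∈ ℝ² : k³x² + (k(d+l)² − 4dlv)y² − 2k(kd − 2lv + kl)xy − 2k²lv·x + 2klv(d−l)·y + kl²v² = 0} is an ellipse (the image of the unit circle under an invertible affine map of ℝ²), Ψ_v is contained in the parallelogram D = convex hull of O=(0,0), P=(l,0), Q=(d,k), R=(l+d,k), and Ψ_v meets each of the four sides [O,P], [O,Q], [P,R], [Q,R] of D in exactly one point. -/

import Mathlib

set_option maxHeartbeats 1000000

noncomputable def linMap (a b c e : ℝ) : (ℝ × ℝ) →ₗ[ℝ] ℝ × ℝ where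
  toFun p := (a * p.1 + b * p.2, c * p.1 + e * p.2)
  map_add' p q := by simp [Prod.ext_iff]; constructor <;> ring
  map_smul' r p := by simp [Prod.ext_iff]; constructor <;> ring

noncomputable def linEquiv (a b c e : ℝ) (h : a * e - b * c ≠ 0) : (ℝ × ℝ) ≃ₗ[ℝ] ℝ × ℝ :=
  LinearEquiv.ofLinear (linMap a b c e)
    (linMap (e / (a * e - b * c)) (-b / (a * e - b * c)) (-c / (a * e - b * c)) (a / (a * e - b * c)))
    (by apply LinearMap.ext; intro p; simp [linMap, Prod.ext_iff]; constructor <;> (field_simp [show e * a - c * b ≠ 0 by contrapose! h; linarith, show e * a - b * c ≠ 0 by contrapose! h; linarith, show a * e - c * b ≠ 0 by contrapose! h; linarith]; ring))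
    (by apply LinearMap.ext; intro p; simp [linMap, Prod.ext_iff]; constructor <;> (field_simp [show e * a - c * b ≠ 0 by contrapose! h; linarith, show e * a - b * c ≠ 0 by contrapose! h; linarith, show a * e - c * b ≠ 0 by contrapose! h; linarith]; ring))

noncomputable def affEquiv (a b c e : ℝ) (h : a * e - b * c ≠ 0) (q : ℝ × ℝ) :
    (ℝ × ℝ) ≃ᵃ[ℝ] ℝ × ℝ :=
  (linEquiv a b c e h).toAffineEquiv.trans (AffineEquiv.constVAdd ℝ (ℝ × ℝ) q)

lemma affEquiv_apply (a b c e : ℝ) (h : a * e - b * c ≠ 0) (q p : ℝ × ℝ) :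
    affEquiv a b c e h q p = (q.1 + (a * p.1 + b * p.2), q.2 + (c * p.1 + e * p.2)) := by
  simp [affEquiv, linEquiv, linMap, Prod.ext_iff, AffineEquiv.constVAdd_apply]

/-- The unit circle in `ℝ × ℝ`. -/
def unitCircle : Set (ℝ × ℝ) := {p : ℝ × ℝ | p.1 ^ 2 + p.2 ^ 2 = 1}

/-- A set is an ellipse if it is the image of the unit circle under an
invertible affine map of the plane. -/
def IsEllipse (E : Set (ℝ × ℝ)) : Prop :=
  ∃ f : (ℝ × ℝ) ≃ᵃ[ℝ] (ℝ × ℝ), E = (f : (ℝ × ℝ) → (ℝ × ℝ)) '' unitCircle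

theorem stmt_3 (l k d v : ℝ) (hl : 0 < l) (hk : 0 < k) (hd : 0 ≤ d)
    (hv : v ∈ Set.Ioo (0 : ℝ) k)
    (Ψ : Set (ℝ × ℝ))
    (hΨ : Ψ = {p : ℝ × ℝ |
      k ^ 3 * p.1 ^ 2 + (k * (d + l) ^ 2 - 4 * d * l * v) * p.2 ^ 2
        - 2 * k * (k * d - 2 * l * v + k * l) * p.1 * p.2
        - 2 * k ^ 2 * l * v * p.1 + 2 * k * l * v * (d - l) * p.2 + k * l ^ 2 * v ^ 2 = 0}) :
    IsEllipse Ψ ∧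
    Ψ ⊆ convexHull ℝ {((0 : ℝ), (0 : ℝ)), (l, 0), (d, k), (l + d, k)} ∧
    (∃ p, Ψ ∩ segment ℝ ((0 : ℝ), (0 : ℝ)) (l, 0) = {p}) ∧
    (∃ p, Ψ ∩ segment ℝ ((0 : ℝ), (0 : ℝ)) (d, k) = {p}) ∧
    (∃ p, Ψ ∩ segment ℝ (l, (0 : ℝ)) (l + d, k) = {p}) ∧
    (∃ p, Ψ ∩ segment ℝ (d, k) (l + d, k) = {p}) := by
  obtain ⟨hv0, hvk⟩ := hv
  have hk0 : k ≠ 0 := hk.ne'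
  have hl0 : l ≠ 0 := hl.ne'
  have hkv : 0 < k - v := by linarith
  obtain ⟨α, hα2, hαpos⟩ : ∃ a : ℝ, a ^ 2 = (k - v) / k ∧ 0 < a :=
    ⟨Real.sqrt ((k - v) / k), Real.sq_sqrt (by positivity), Real.sqrt_pos.mpr (by positivity)⟩
  obtain ⟨β, hβ2, hβpos⟩ : ∃ a : ℝ, a ^ 2 = v / k ∧ 0 < a :=
    ⟨Real.sqrt (v / k), Real.sq_sqrt (by positivity), Real.sqrt_pos.mpr (by positivity)⟩
  have hαne : α ≠ 0 := hαpos.ne'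
  have hβne : β ≠ 0 := hβpos.ne'
  have hab : α ^ 2 + β ^ 2 = 1 := by rw [hα2, hβ2]; field_simp; ring
  have hdet : ((l + d) * α / 2) * (-(k * β) / 2) - ((l - d) * β / 2) * (k * α / 2) ≠ 0 := by
    have he : ((l + d) * α / 2) * (-(k * β) / 2) - ((l - d) * β / 2) * (k * α / 2)
        = -(k * l * α * β) / 2 := by ring
    rw [he]
    have h5 : 0 < k * l * α * β := by positivity
    intro hc; nlinarith
  obtain ⟨f, key⟩ : ∃ f : (ℝ × ℝ) ≃ᵃ[ℝ] ℝ × ℝ, ∀ q : ℝ × ℝ,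
      f q = ((l + d) / 2 + ((l + d) * α / 2 * q.1 + (l - d) * β / 2 * q.2),
      k / 2 + (k * α / 2 * q.1 + -(k * β) / 2 * q.2)) :=
    ⟨affEquiv ((l + d) * α / 2) ((l - d) * β / 2) (k * α / 2) (-(k * β) / 2) hdet
      ((l + d) / 2, k / 2), fun q => affEquiv_apply _ _ _ _ _ _ q⟩
  have himg : Ψ = ⇑f '' unitCircle := by
    rw [hΨ]; ext p
    simp only [Set.mem_setOf_eq, Set.mem_image, unitCircle]
    constructor
    · intro hF
      obtain ⟨w, hw⟩ : ∃ w : ℝ, w = p.2 / k := ⟨_, rfl⟩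
      obtain ⟨u, hu⟩ : ∃ u : ℝ, u = (p.1 - d * w) / l := ⟨_, rfl⟩
      have hx : p.1 = l * u + d * w := by rw [hu, hw]; field_simp; ring
      have hy : p.2 = k * w := by rw [hw]; field_simp
      rw [hx, hy] at hF
      have hG : k * v * (u + w - 1) ^ 2 + k * (k - v) * (u - w) ^ 2 = v * (k - v) := by
        have hkl : (k * l ^ 2) ≠ 0 := by positivity
        have h2 : k * l ^ 2 * (k * v * (u + w - 1) ^ 2 + k * (k - v) * (u - w) ^ 2
            - v * (k - v)) = 0 := by linear_combination hF
        have h3 := (mul_eq_zero.mp h2).resolve_left hkl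
        linarith
      refine ⟨((u + w - 1) / α, (u - w) / β), ?_, ?_⟩
      · show ((u + w - 1) / α) ^ 2 + ((u - w) / β) ^ 2 = 1
        rw [div_pow, div_pow, hα2, hβ2]
        field_simp
        linear_combination hG
      · rw [key, Prod.ext_iff]
        constructor
        · show (l + d) / 2 + ((l + d) * α / 2 * ((u + w - 1) / α)
              + (l - d) * β / 2 * ((u - w) / β)) = p.1
          rw [hx]; field_simp; ring
        · show k / 2 + (k * α / 2 * ((u + w - 1) / α) + -(k * β) / 2 * ((u - w) / β)) = p.2
          rw [hy]; field_simp; ring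
    · rintro ⟨q, hq, rfl⟩
      rw [key]
      have hα2' : k * α ^ 2 = k - v := by rw [hα2]; field_simp
      have hβ2' : k * β ^ 2 = v := by rw [hβ2]; field_simp
      linear_combination (k * l ^ 2 * v * q.1 ^ 2) * hα2' + (k * l ^ 2 * (k - v) * q.2 ^ 2) * hβ2'
        + (k * l ^ 2 * v * (k - v)) * hq
  refine ⟨⟨f, himg⟩, ?_, ?_, ?_, ?_, ?_⟩
  · -- containment in the parallelogram
    intro p hp
    rw [himg] at hp
    obtain ⟨q, hq, rfl⟩ := hp
    simp only [unitCircle, Set.mem_setOf_eq] at hq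
    obtain ⟨u, hu⟩ : ∃ u : ℝ, u = 1 / 2 + (α * q.1 + β * q.2) / 2 := ⟨_, rfl⟩
    obtain ⟨w, hw⟩ : ∃ w : ℝ, w = 1 / 2 + (α * q.1 - β * q.2) / 2 := ⟨_, rfl⟩
    have hX : (α * q.1 + β * q.2) ^ 2 ≤ 1 := by
      nlinarith [sq_nonneg (α * q.2 - β * q.1)]
    have hY : (α * q.1 - β * q.2) ^ 2 ≤ 1 := by
      nlinarith [sq_nonneg (α * q.2 + β * q.1)]
    have hX' := abs_le.mp ((sq_le_one_iff_abs_le_one _).mp hX)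
    have hY' := abs_le.mp ((sq_le_one_iff_abs_le_one _).mp hY)
    have hu0 : 0 ≤ u := by rw [hu]; linarith [hX'.1]
    have hu1 : u ≤ 1 := by rw [hu]; linarith [hX'.2]
    have hw0 : 0 ≤ w := by rw [hw]; linarith [hY'.1]
    have hw1 : w ≤ 1 := by rw [hw]; linarith [hY'.2]
    have hco := convex_convexHull ℝ ({((0 : ℝ), (0 : ℝ)), (l, 0), (d, k), (l + d, k)} : Set (ℝ × ℝ))
    have hsub := subset_convexHull ℝ ({((0 : ℝ), (0 : ℝ)), (l, 0), (d, k), (l + d, k)} : Set (ℝ × ℝ))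
    have hO : ((0 : ℝ), (0 : ℝ)) ∈ convexHull ℝ ({((0 : ℝ), (0 : ℝ)), (l, 0), (d, k), (l + d, k)} : Set (ℝ × ℝ)) :=
      hsub (by simp)
    have hP : ((l : ℝ), (0 : ℝ)) ∈ convexHull ℝ ({((0 : ℝ), (0 : ℝ)), (l, 0), (d, k), (l + d, k)} : Set (ℝ × ℝ)) :=
      hsub (by simp)
    have hQ : ((d : ℝ), (k : ℝ)) ∈ convexHull ℝ ({((0 : ℝ), (0 : ℝ)), (l, 0), (d, k), (l + d, k)} : Set (ℝ × ℝ)) :=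
      hsub (by simp)
    have hR : ((l + d : ℝ), (k : ℝ)) ∈ convexHull ℝ ({((0 : ℝ), (0 : ℝ)), (l, 0), (d, k), (l + d, k)} : Set (ℝ × ℝ)) :=
      hsub (by simp)
    have hm1 := hco hO hP (by linarith : (0:ℝ) ≤ 1 - u) (by linarith : (0:ℝ) ≤ u) (by ring)
    have hm2 := hco hQ hR (by linarith : (0:ℝ) ≤ 1 - u) (by linarith : (0:ℝ) ≤ u) (by ring)
    have hfin := hco hm1 hm2 (by linarith : (0:ℝ) ≤ 1 - w) (by linarith : (0:ℝ) ≤ w) (by ring)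
    have heq : f q = (1 - w) • ((1 - u) • ((0 : ℝ), (0 : ℝ)) + u • ((l : ℝ), (0 : ℝ)))
        + w • ((1 - u) • ((d : ℝ), (k : ℝ)) + u • ((l + d : ℝ), (k : ℝ))) := by
      rw [key, hu, hw, Prod.ext_iff]
      constructor
      · show (l + d) / 2 + ((l + d) * α / 2 * q.1 + (l - d) * β / 2 * q.2) = _
        simp [Prod.smul_mk, smul_eq_mul]
        ring
      · show k / 2 + (k * α / 2 * q.1 + -(k * β) / 2 * q.2) = _
        simp [Prod.smul_mk, smul_eq_mul]
        ring
    rw [heq]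
    exact hfin
  · -- bottom side
    refine ⟨(l * v / k, 0), ?_⟩
    ext p
    simp only [Set.mem_inter_iff, Set.mem_singleton_iff, hΨ, Set.mem_setOf_eq,
      segment_eq_image, Set.mem_image, Set.mem_Icc]
    constructor
    · rintro ⟨hF, θ, ⟨h0, h1⟩, hpθ⟩
      have hp1 : p.1 = θ * l := by rw [← hpθ]; simp
      have hp2 : p.2 = 0 := by rw [← hpθ]; simp
      rw [hp1, hp2] at hF
      have h2 : k * l ^ 2 * (k * θ - v) ^ 2 = 0 := by linear_combination hF
      have h3 : (k * θ - v) ^ 2 = 0 := (mul_eq_zero.mp h2).resolve_left (by positivity)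
      have h4 : k * θ = v := by nlinarith [sq_nonneg (k * θ - v)]
      have hθ : θ = v / k := by field_simp; linarith
      rw [Prod.ext_iff]
      exact ⟨by rw [hp1, hθ]; ring, hp2⟩
    · rintro rfl
      refine ⟨by simp; field_simp; ring, v / k, ⟨by positivity, by rw [div_le_one hk]; linarith⟩, ?_⟩
      simp [Prod.ext_iff]
      ring
  · -- left side O-Q
    refine ⟨(d * v / k, v), ?_⟩
    ext p
    simp only [Set.mem_inter_iff, Set.mem_singleton_iff, hΨ, Set.mem_setOf_eq,
      segment_eq_image, Set.mem_image, Set.mem_Icc]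
    constructor
    · rintro ⟨hF, θ, ⟨h0, h1⟩, hpθ⟩
      have hp1 : p.1 = θ * d := by rw [← hpθ]; simp
      have hp2 : p.2 = θ * k := by rw [← hpθ]; simp
      rw [hp1, hp2] at hF
      have h2 : k * l ^ 2 * (k * θ - v) ^ 2 = 0 := by linear_combination hF
      have h3 : (k * θ - v) ^ 2 = 0 := (mul_eq_zero.mp h2).resolve_left (by positivity)
      have h4 : k * θ = v := by nlinarith [sq_nonneg (k * θ - v)]
      have hθ : θ = v / k := by field_simp; linarith
      rw [Prod.ext_iff]
      exact ⟨by rw [hp1, hθ]; ring, by rw [hp2, hθ]; field_simp⟩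
    · rintro rfl
      refine ⟨by simp; field_simp; ring, v / k, ⟨by positivity, by rw [div_le_one hk]; linarith⟩, ?_⟩
      simp [Prod.ext_iff]
      constructor
      · ring
      · field_simp
  · -- right side P-R
    refine ⟨(l + d * (k - v) / k, k - v), ?_⟩
    ext p
    simp only [Set.mem_inter_iff, Set.mem_singleton_iff, hΨ, Set.mem_setOf_eq,
      segment_eq_image, Set.mem_image, Set.mem_Icc]
    constructor
    · rintro ⟨hF, θ, ⟨h0, h1⟩, hpθ⟩
      have hp1 : p.1 = l + θ * d := by rw [← hpθ]; simp; ring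
      have hp2 : p.2 = θ * k := by rw [← hpθ]; simp
      rw [hp1, hp2] at hF
      have h2 : k * l ^ 2 * (k * θ - (k - v)) ^ 2 = 0 := by linear_combination hF
      have h3 : (k * θ - (k - v)) ^ 2 = 0 := (mul_eq_zero.mp h2).resolve_left (by positivity)
      have h4 : k * θ = k - v := by nlinarith [sq_nonneg (k * θ - (k - v))]
      have hθ : θ = (k - v) / k := by field_simp; linarith
      rw [Prod.ext_iff]
      exact ⟨by rw [hp1, hθ]; ring, by rw [hp2, hθ]; field_simp⟩
    · rintro rfl
      refine ⟨by simp; field_simp; ring, (k - v) / k,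
        ⟨by positivity, by rw [div_le_one hk]; linarith⟩, ?_⟩
      simp [Prod.ext_iff]
      constructor
      · field_simp; ring
      · field_simp
  · -- top side Q-R
    refine ⟨(d + l * (k - v) / k, k), ?_⟩
    ext p
    simp only [Set.mem_inter_iff, Set.mem_singleton_iff, hΨ, Set.mem_setOf_eq,
      segment_eq_image, Set.mem_image, Set.mem_Icc]
    constructor
    · rintro ⟨hF, θ, ⟨h0, h1⟩, hpθ⟩
      have hp1 : p.1 = d + θ * l := by rw [← hpθ]; simp; ring
      have hp2 : p.2 = k := by rw [← hpθ]; simp; ring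
      rw [hp1, hp2] at hF
      have h2 : k * l ^ 2 * (k * θ - (k - v)) ^ 2 = 0 := by linear_combination hF
      have h3 : (k * θ - (k - v)) ^ 2 = 0 := (mul_eq_zero.mp h2).resolve_left (by positivity)
      have h4 : k * θ = k - v := by nlinarith [sq_nonneg (k * θ - (k - v))]
      have hθ : θ = (k - v) / k := by field_simp; linarith
      rw [Prod.ext_iff]
      exact ⟨by rw [hp1, hθ]; ring, hp2⟩
    · rintro rfl
      refine ⟨by simp; field_simp; ring, (k - v) / k,
        ⟨by positivity, by rw [div_le_one hk]; linarith⟩, ?_⟩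
      simp [Prod.ext_iff]
      constructor
      · field_simp; ring
      · ring
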